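/- Let F_Q = {f(·;θ) : ‖θ‖_P ≤ Q} be the set of two-layer networks f(x;θ) = ∑_{k=1}^m a_k σ(⟨w_k,x⟩) whose path norm ‖θ‖_P = ∑_k |a_k|‖w_k‖₁ is at most Q, where σ is 1-Lipschitz and positively homogeneous. Then for any samples x₁,…,x_n ∈ [−1,1]^d, the empirical Rademacher complexity satisfies R̂_n(F_Q) ≤ 2Q√(2 ln(2d)/n). -/

import Mathlib

open Finset

namespace Stmt6

noncomputable section

/-- The sign `±1` corresponding to a boolean. -/
def sgn {n : ℕ} (ε : Fin n → Bool) (i : Fin n) : ℝ := if ε i then 1 else -1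

lemma abs_sgn {n : ℕ} (ε : Fin n → Bool) (i : Fin n) : |sgn ε i| = 1 := by
  unfold sgn; split <;> norm_num

lemma sgn_mul_le {n : ℕ} (ε : Fin n → Bool) (i : Fin n) (t : ℝ) :
    sgn ε i * t ≤ |t| := by
  calc sgn ε i * t ≤ |sgn ε i * t| := le_abs_self _
  _ = |t| := by rw [abs_mul, abs_sgn, one_mul]

section Contraction

variable {ι : Type*} [Nonempty ι]

lemma bdd_range {n : ℕ} {B : ℝ} {f : ι → Fin n → ℝ} (hf : ∀ c i, |f c i| ≤ B)
    (ε : Fin n → Bool) :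
    BddAbove (Set.range fun c => ∑ i, sgn ε i * f c i) := by
  refine ⟨n * B, ?_⟩
  rintro _ ⟨c, rfl⟩
  have h1 : ∑ i, sgn ε i * f c i ≤ ∑ _i : Fin n, B :=
    Finset.sum_le_sum fun i _ => (sgn_mul_le ε i _).trans (hf c i)
  simpa using h1

lemma pair_ineq (φ : ℝ → ℝ) (hφ : ∀ s t : ℝ, |φ s - φ t| ≤ |s - t|)
    (a R : ι → ℝ)
    (h1 : BddAbove (Set.range fun c => a c + R c))
    (h2 : BddAbove (Set.range fun c => -a c + R c)) :
    (⨆ c, (φ (a c) + R c)) + (⨆ c, (-φ (a c) + R c)) ≤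
      (⨆ c, (a c + R c)) + (⨆ c, (-a c + R c)) := by
  set X := (⨆ c, (a c + R c)) + (⨆ c, (-a c + R c)) with hX
  have key : ∀ c₁ c₂ : ι, (φ (a c₁) + R c₁) + (-φ (a c₂) + R c₂) ≤ X := by
    intro c₁ c₂
    have hlip := hφ (a c₁) (a c₂)
    rcases le_total (a c₂) (a c₁) with h | h
    · have h5 : φ (a c₁) - φ (a c₂) ≤ a c₁ - a c₂ :=
        (le_abs_self _).trans (hlip.trans_eq (abs_of_nonneg (by linarith)))
      have hA := le_ciSup h1 c₁
      have hB := le_ciSup h2 c₂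
      have hA' : a c₁ + R c₁ ≤ ⨆ c, (a c + R c) := hA
      have hB' : -a c₂ + R c₂ ≤ ⨆ c, (-a c + R c) := hB
      rw [hX]; linarith
    · have h5 : φ (a c₁) - φ (a c₂) ≤ a c₂ - a c₁ := by
        refine (le_abs_self _).trans (hlip.trans_eq ?_)
        rw [abs_sub_comm]; exact abs_of_nonneg (by linarith)
      have hA' : a c₂ + R c₂ ≤ ⨆ c, (a c + R c) := le_ciSup h1 c₂
      have hB' : -a c₁ + R c₁ ≤ ⨆ c, (-a c + R c) := le_ciSup h2 c₁
      rw [hX]; linarith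
  have h2' : ∀ c₁ : ι, (⨆ c, (-φ (a c) + R c)) ≤ X - (φ (a c₁) + R c₁) :=
    fun c₁ => ciSup_le fun c₂ => by have := key c₁ c₂; linarith
  have h1' : (⨆ c, (φ (a c) + R c)) ≤ X - (⨆ c, (-φ (a c) + R c)) :=
    ciSup_le fun c₁ => by have := h2' c₁; linarith
  linarith


/-- One-coordinate step of the Ledoux–Talagrand contraction argument. -/
lemma contraction_step {n : ℕ} (g : ι → Fin n → ℝ) (B : ℝ)
    (hg : ∀ c i, |g c i| ≤ B)
    (φ : ℝ → ℝ) (hφ : ∀ s t : ℝ, |φ s - φ t| ≤ |s - t|) (hφ0 : φ 0 = 0)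
    (A : Finset (Fin n)) (i₀ : Fin n) (hi₀ : i₀ ∉ A) :
    ∑ ε : Fin n → Bool, ⨆ c, ∑ i, sgn ε i *
        (if i ∈ insert i₀ A then φ (g c i) else g c i) ≤
    ∑ ε : Fin n → Bool, ⨆ c, ∑ i, sgn ε i *
        (if i ∈ A then φ (g c i) else g c i) := by
  have hφabs : ∀ t : ℝ, |φ t| ≤ |t| := fun t => by
    have := hφ t 0; simpa [hφ0] using this
  set h1 : ι → Fin n → ℝ := fun c i => if i ∈ insert i₀ A then φ (g c i) else g c i
    with hh1
  set h2 : ι → Fin n → ℝ := fun c i => if i ∈ A then φ (g c i) else g c i with hh2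
  have hb1 : ∀ c i, |h1 c i| ≤ B := by
    intro c i; rw [hh1]; dsimp only; split
    · exact (hφabs _).trans (hg c i)
    · exact hg c i
  have hb2 : ∀ c i, |h2 c i| ≤ B := by
    intro c i; rw [hh2]; dsimp only; split
    · exact (hφabs _).trans (hg c i)
    · exact hg c i
  set F : (Fin n → Bool) → ℝ := fun ε => ⨆ c, ∑ i, sgn ε i * h1 c i with hF
  set G : (Fin n → Bool) → ℝ := fun ε => ⨆ c, ∑ i, sgn ε i * h2 c i with hG
  -- the flip involution
  set flip : (Fin n → Bool) → (Fin n → Bool) :=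
    fun ε => Function.update ε i₀ (!ε i₀) with hflip
  have hflip_invol : Function.Involutive flip := by
    intro ε; funext j
    rcases eq_or_ne j i₀ with rfl | hj
    · simp [hflip, Function.update_self]
    · simp [hflip, Function.update_of_ne hj]
  have hflip_ne : ∀ ε (i : Fin n), i ≠ i₀ → flip ε i = ε i := by
    intro ε i hi; simp [hflip, Function.update_of_ne hi]
  have hflip_i₀ : ∀ ε, flip ε i₀ = !ε i₀ := by
    intro ε; simp [hflip, Function.update_self]
  -- key pairwise inequality
  have key : ∀ ε, F ε + F (flip ε) ≤ G ε + G (flip ε) := by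
    intro ε
    set R : ι → ℝ := fun c => ∑ i ∈ univ.erase i₀, sgn ε i * h2 c i with hRdef
    have hRflip : ∀ c, ∑ i ∈ univ.erase i₀, sgn (flip ε) i * h2 c i = R c := by
      intro c
      refine Finset.sum_congr rfl fun i hi => ?_
      have hi' : i ≠ i₀ := Finset.ne_of_mem_erase hi
      rw [sgn, sgn, hflip_ne ε i hi']
    have hh12 : ∀ c (i : Fin n), i ≠ i₀ → h1 c i = h2 c i := by
      intro c i hi
      rw [hh1, hh2]; dsimp only
      simp [Finset.mem_insert, hi]
    have hsplit1 : ∀ (ε' : Fin n → Bool), (∀ i, i ≠ i₀ → ε' i = ε i) →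
        ∀ c, ∑ i, sgn ε' i * h1 c i = sgn ε' i₀ * φ (g c i₀) + R c := by
      intro ε' hε' c
      rw [← Finset.add_sum_erase univ _ (Finset.mem_univ i₀)]
      congr 1
      · rw [hh1]; simp
      · refine Finset.sum_congr rfl fun i hi => ?_
        have hi' : i ≠ i₀ := Finset.ne_of_mem_erase hi
        rw [hh12 c i hi', sgn, sgn, hε' i hi']
    have hsplit2 : ∀ (ε' : Fin n → Bool), (∀ i, i ≠ i₀ → ε' i = ε i) →
        ∀ c, ∑ i, sgn ε' i * h2 c i = sgn ε' i₀ * g c i₀ + R c := by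
      intro ε' hε' c
      rw [← Finset.add_sum_erase univ _ (Finset.mem_univ i₀)]
      congr 1
      · rw [hh2]; simp [hi₀]
      · refine Finset.sum_congr rfl fun i hi => ?_
        have hi' : i ≠ i₀ := Finset.ne_of_mem_erase hi
        rw [sgn, sgn, hε' i hi']
    have hεself : ∀ i, i ≠ i₀ → ε i = ε i := fun _ _ => rfl
    have hεflip : ∀ i, i ≠ i₀ → flip ε i = ε i := hflip_ne ε
    -- BddAbove facts
    have hB : 0 ≤ B := (abs_nonneg _).trans (hg (Classical.arbitrary ι) i₀)
    have hcard : ((univ.erase i₀).card : ℝ) * B ≤ n * B := by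
      have hc : (univ.erase i₀).card ≤ n :=
        le_trans (Finset.card_erase_le) (by simp)
      exact mul_le_mul_of_nonneg_right (by exact_mod_cast hc) hB
    have hR : ∀ c, R c ≤ n * B := by
      intro c
      have h1' : R c ≤ ∑ i ∈ univ.erase i₀, B :=
        Finset.sum_le_sum fun i _ => (sgn_mul_le ε i _).trans (hb2 c i)
      rw [Finset.sum_const, nsmul_eq_mul] at h1'
      linarith
    have hbdd1 : BddAbove (Set.range fun c => g c i₀ + R c) := by
      refine ⟨B + n * B, ?_⟩
      rintro _ ⟨c, rfl⟩
      have := (abs_le.mp (hg c i₀)).2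
      have := hR c
      dsimp only
      linarith
    have hbdd2 : BddAbove (Set.range fun c => -g c i₀ + R c) := by
      refine ⟨B + n * B, ?_⟩
      rintro _ ⟨c, rfl⟩
      have := (abs_le.mp (hg c i₀)).1
      have := hR c
      dsimp only
      linarith
    have hpair := pair_ineq φ hφ (fun c => g c i₀) R hbdd1 hbdd2
    -- now rewrite F, G using the splits, with cases on ε i₀
    have hFε : F ε = ⨆ c, (sgn ε i₀ * φ (g c i₀) + R c) := by
      rw [hF]; exact iSup_congr (hsplit1 ε hεself)
    have hFflip : F (flip ε) = ⨆ c, ((- sgn ε i₀) * φ (g c i₀) + R c) := by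
      rw [hF]
      refine iSup_congr fun c => ?_
      rw [hsplit1 (flip ε) hεflip c]
      congr 2
      rw [sgn, sgn, hflip_i₀ ε]
      cases hb : ε i₀ <;> simp
    have hGε : G ε = ⨆ c, (sgn ε i₀ * g c i₀ + R c) := by
      rw [hG]; exact iSup_congr (hsplit2 ε hεself)
    have hGflip : G (flip ε) = ⨆ c, ((- sgn ε i₀) * g c i₀ + R c) := by
      rw [hG]
      refine iSup_congr fun c => ?_
      rw [hsplit2 (flip ε) hεflip c]
      congr 2
      rw [sgn, sgn, hflip_i₀ ε]
      cases hb : ε i₀ <;> simp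
    rw [hFε, hFflip, hGε, hGflip]
    cases hb : ε i₀
    · -- sgn ε i₀ = -1
      have hs : sgn ε i₀ = -1 := by rw [sgn, hb]; simp
      rw [hs]
      norm_num
      rw [add_comm (⨆ c, (-(φ (g c i₀)) + R c)), add_comm (⨆ c, (-g c i₀ + R c))]
      convert hpair using 3 <;> norm_num
    · have hs : sgn ε i₀ = 1 := by rw [sgn, hb]; simp
      rw [hs]
      norm_num
      convert hpair using 3 <;> norm_num
  -- sum over the involution
  have hsum : ∀ (H : (Fin n → Bool) → ℝ), ∑ ε, H (flip ε) = ∑ ε, H ε := by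
    intro H
    exact Fintype.sum_equiv (Function.Involutive.toPerm flip hflip_invol) _ _ (fun ε => rfl)
  have h2sum : 2 * ∑ ε, F ε ≤ 2 * ∑ ε, G ε := by
    have : ∑ ε, (F ε + F (flip ε)) ≤ ∑ ε, (G ε + G (flip ε)) :=
      Finset.sum_le_sum fun ε _ => key ε
    rw [Finset.sum_add_distrib, Finset.sum_add_distrib, hsum F, hsum G] at this
    linarith
  linarith

/-- Contraction lemma for finite Rademacher averages. -/
lemma contraction {n : ℕ} (g : ι → Fin n → ℝ) (B : ℝ)
    (hg : ∀ c i, |g c i| ≤ B)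
    (φ : ℝ → ℝ) (hφ : ∀ s t : ℝ, |φ s - φ t| ≤ |s - t|) (hφ0 : φ 0 = 0) :
    ∑ ε : Fin n → Bool, ⨆ c, ∑ i, sgn ε i * φ (g c i) ≤
    ∑ ε : Fin n → Bool, ⨆ c, ∑ i, sgn ε i * g c i := by
  have main : ∀ A : Finset (Fin n),
      ∑ ε : Fin n → Bool, ⨆ c, ∑ i, sgn ε i * (if i ∈ A then φ (g c i) else g c i) ≤
      ∑ ε : Fin n → Bool, ⨆ c, ∑ i, sgn ε i * (if i ∈ (∅ : Finset (Fin n)) then φ (g c i) else g c i) := by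
    intro A
    induction A using Finset.induction_on with
    | empty => exact le_refl _
    | @insert i₀ A hi₀ ih =>
      exact (contraction_step g B hg φ hφ hφ0 A i₀ hi₀).trans ih
  have h := main univ
  simpa using h

end Contraction

end

section Massart

lemma mgf_bound {n : ℕ} (lam : ℝ) (y : Fin n → ℝ) (hy : ∀ i, |y i| ≤ 1) :
    ∑ ε : Fin n → Bool, Real.exp (lam * ∑ i, sgn ε i * y i) ≤
      2 ^ n * Real.exp (n * lam ^ 2 / 2) := by
  have hfact : ∀ ε : Fin n → Bool, Real.exp (lam * ∑ i, sgn ε i * y i) =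
      ∏ i, Real.exp (lam * ((if ε i then (1:ℝ) else -1) * y i)) := by
    intro ε
    rw [Finset.mul_sum, Real.exp_sum]
    exact Finset.prod_congr rfl fun i _ => by rw [sgn]
  calc ∑ ε : Fin n → Bool, Real.exp (lam * ∑ i, sgn ε i * y i)
      = ∑ ε : Fin n → Bool, ∏ i, Real.exp (lam * ((if ε i then (1:ℝ) else -1) * y i)) :=
        Finset.sum_congr rfl fun ε _ => hfact ε
    _ = ∏ i, ∑ b : Bool, Real.exp (lam * ((if b then (1:ℝ) else -1) * y i)) := by
        have hps := Finset.prod_univ_sum (fun _ : Fin n => (univ : Finset Bool))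
          (fun i b => Real.exp (lam * ((if b then (1:ℝ) else -1) * y i)))
        rw [Fintype.piFinset_univ] at hps
        exact hps.symm
    _ ≤ ∏ _i : Fin n, 2 * Real.exp (lam ^ 2 / 2) := by
        refine Finset.prod_le_prod (fun i _ => ?_) (fun i _ => ?_)
        · exact Finset.sum_nonneg fun b _ => (Real.exp_pos _).le
        · rw [Fintype.sum_bool]
          norm_num
          have hcosh : Real.exp (lam * y i) + Real.exp (-(lam * y i)) =
              2 * Real.cosh (lam * y i) := by
            rw [Real.cosh_eq]; ring
          rw [hcosh]
          have h1 : Real.cosh (lam * y i) ≤ Real.exp ((lam * y i) ^ 2 / 2) :=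
            Real.cosh_le_exp_half_sq _
          have h2 : Real.exp ((lam * y i) ^ 2 / 2) ≤ Real.exp (lam ^ 2 / 2) := by
            apply Real.exp_le_exp.mpr
            have : (y i) ^ 2 ≤ 1 := by
              have := hy i; nlinarith [abs_nonneg (y i), sq_abs (y i)]
            nlinarith [sq_nonneg lam]
          linarith
    _ = 2 ^ n * Real.exp (n * lam ^ 2 / 2) := by
        rw [Finset.prod_const, Finset.card_univ, Fintype.card_fin, mul_pow,
          ← Real.exp_nat_mul]
        ring_nf

lemma sum_log_le {α : Type*} [Fintype α] [Nonempty α] (Z : α → ℝ) (hZ : ∀ a, 0 < Z a) :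
    ∑ a, Real.log (Z a) ≤
      (Fintype.card α : ℝ) * Real.log ((1 / (Fintype.card α : ℝ)) * ∑ a, Z a) := by
  have hcard : (0 : ℝ) < (Fintype.card α : ℝ) := by
    exact_mod_cast Fintype.card_pos
  have hjensen := strictConcaveOn_log_Ioi.concaveOn.le_map_sum
    (t := Finset.univ) (w := fun _ : α => 1 / (Fintype.card α : ℝ)) (p := Z)
    (fun a _ => by positivity)
    (by rw [Finset.sum_const, Finset.card_univ, nsmul_eq_mul]; field_simp)
    (fun a _ => hZ a)
  simp only [smul_eq_mul] at hjensen
  rw [← Finset.mul_sum] at hjensen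
  rw [← Finset.mul_sum] at hjensen
  calc ∑ a, Real.log (Z a)
      = (Fintype.card α : ℝ) * ((1 / (Fintype.card α : ℝ)) * ∑ a, Real.log (Z a)) := by
        field_simp
    _ ≤ (Fintype.card α : ℝ) * Real.log ((1 / (Fintype.card α : ℝ)) * ∑ a, Z a) := by
        apply mul_le_mul_of_nonneg_left _ hcard.le
        exact hjensen

end Massart
section Linear

/-- The closed unit ball of `ℓ¹`. -/
def Uball (d : ℕ) : Type := {u : Fin d → ℝ // ∑ j, |u j| ≤ 1}

instance (d : ℕ) : Nonempty (Uball d) := ⟨⟨0, by simp⟩⟩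

lemma linear_bound {d n : ℕ} (hd : 0 < d) (hn : 0 < n) (x : Fin n → Fin d → ℝ)
    (hx : ∀ i j, |x i j| ≤ 1) :
    ∑ ε : Fin n → Bool, ⨆ u : Uball d, ∑ i, sgn ε i * ∑ j, u.1 j * x i j ≤
      2 ^ n * (n * Real.sqrt (2 * Real.log (2 * d) / n)) := by
  haveI : Nonempty (Fin d) := Fin.pos_iff_nonempty.mp hd
  have hne : (univ : Finset (Fin d)).Nonempty := univ_nonempty
  have hd1 : (1 : ℝ) ≤ d := by exact_mod_cast hd
  have hlog : 0 < Real.log (2 * d) := Real.log_pos (by linarith)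
  have hnR : (0 : ℝ) < n := by exact_mod_cast hn
  set lam : ℝ := Real.sqrt (2 * Real.log (2 * d) / n) with hlamdef
  have hlam : 0 < lam := Real.sqrt_pos.mpr (by positivity)
  have hlam2 : lam ^ 2 = 2 * Real.log (2 * d) / n := Real.sq_sqrt (by positivity)
  set Z : (Fin n → Bool) → ℝ := fun ε => ∑ j,
      (Real.exp (lam * ∑ i, sgn ε i * x i j) +
       Real.exp (lam * ∑ i, sgn ε i * (-(x i j)))) with hZdef
  have hZpos : ∀ ε, 0 < Z ε := fun ε =>
    Finset.sum_pos (fun j _ => by positivity) hne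
  -- Step A : pointwise bound of the sup by (1/lam) * log (Z ε)
  have stepA : ∀ ε : Fin n → Bool,
      (⨆ u : Uball d, ∑ i, sgn ε i * ∑ j, u.1 j * x i j) ≤
        (1 / lam) * Real.log (Z ε) := by
    intro ε
    set v : Fin d → ℝ := fun j => ∑ i, sgn ε i * x i j with hvdef
    set M : ℝ := univ.sup' hne (fun j => |v j|) with hMdef
    obtain ⟨j₀, -, hj₀⟩ := Finset.exists_mem_eq_sup' hne (fun j => |v j|)
    have hMnonneg : 0 ≤ M := by rw [hMdef, hj₀]; exact abs_nonneg _
    have hlamM : lam * M ≤ Real.log (Z ε) := by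
      rw [Real.le_log_iff_exp_le (hZpos ε)]
      have hterm : Real.exp (lam * M) ≤
          Real.exp (lam * ∑ i, sgn ε i * x i j₀) +
          Real.exp (lam * ∑ i, sgn ε i * (-(x i j₀))) := by
        rcases abs_cases (v j₀) with ⟨habs, -⟩ | ⟨habs, -⟩
        · have : lam * M = lam * ∑ i, sgn ε i * x i j₀ := by
            rw [hMdef, hj₀, habs]
          rw [this]
          have := Real.exp_pos (lam * ∑ i, sgn ε i * (-(x i j₀)))
          linarith
        · have hneg : ∑ i, sgn ε i * (-(x i j₀)) = -(v j₀) := by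
            rw [hvdef]; dsimp only
            rw [← Finset.sum_neg_distrib]
            exact Finset.sum_congr rfl fun i _ => by ring
          have : lam * M = lam * ∑ i, sgn ε i * (-(x i j₀)) := by
            rw [hMdef, hj₀, habs, hneg]
          rw [this]
          have := Real.exp_pos (lam * ∑ i, sgn ε i * x i j₀)
          linarith
      refine hterm.trans ?_
      rw [hZdef]
      exact Finset.single_le_sum (f := fun j =>
        Real.exp (lam * ∑ i, sgn ε i * x i j) +
        Real.exp (lam * ∑ i, sgn ε i * (-(x i j))))
        (fun j _ => by positivity) (mem_univ j₀)
    refine ciSup_le fun u => ?_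
    have hswap : ∑ i, sgn ε i * ∑ j, u.1 j * x i j = ∑ j, u.1 j * v j := by
      calc ∑ i, sgn ε i * ∑ j, u.1 j * x i j
          = ∑ i, ∑ j, u.1 j * (sgn ε i * x i j) := by
            refine Finset.sum_congr rfl fun i _ => ?_
            rw [Finset.mul_sum]
            exact Finset.sum_congr rfl fun j _ => by ring
        _ = ∑ j, ∑ i, u.1 j * (sgn ε i * x i j) := Finset.sum_comm
        _ = ∑ j, u.1 j * v j := by
            refine Finset.sum_congr rfl fun j _ => ?_
            rw [hvdef, Finset.mul_sum]
    have huv : ∑ j, u.1 j * v j ≤ M := by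
      have h1 : ∑ j, u.1 j * v j ≤ ∑ j, |u.1 j| * M := by
        refine Finset.sum_le_sum fun j _ => ?_
        have h2 : u.1 j * v j ≤ |u.1 j| * |v j| := by
          calc u.1 j * v j ≤ |u.1 j * v j| := le_abs_self _
            _ = |u.1 j| * |v j| := abs_mul _ _
        have h3 : |v j| ≤ M := Finset.le_sup' (fun j => |v j|) (mem_univ j)
        nlinarith [abs_nonneg (u.1 j)]
      rw [← Finset.sum_mul] at h1
      have h4 : (∑ j, |u.1 j|) * M ≤ 1 * M :=
        mul_le_mul_of_nonneg_right u.2 hMnonneg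
      linarith
    rw [hswap]
    refine huv.trans ?_
    rw [one_div, inv_mul_eq_div, le_div_iff₀ hlam]
    calc M * lam = lam * M := mul_comm _ _
      _ ≤ Real.log (Z ε) := hlamM
  -- Step B + C : expectation bound
  have cardfun : (Fintype.card (Fin n → Bool) : ℝ) = 2 ^ n := by
    simp [Fintype.card_fun]
  have stepC : (1 / (2 ^ n : ℝ)) * ∑ ε, Z ε ≤
      2 * d * Real.exp (n * lam ^ 2 / 2) := by
    have hswap : ∑ ε : Fin n → Bool, Z ε = ∑ j : Fin d,
        ((∑ ε : Fin n → Bool, Real.exp (lam * ∑ i, sgn ε i * x i j)) +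
         (∑ ε : Fin n → Bool, Real.exp (lam * ∑ i, sgn ε i * (-(x i j))))) := by
      rw [hZdef, Finset.sum_comm]
      exact Finset.sum_congr rfl fun j _ => Finset.sum_add_distrib
    have hje : ∑ ε : Fin n → Bool, Z ε ≤
        ∑ _j : Fin d, (2 ^ n * Real.exp (n * lam ^ 2 / 2) +
          2 ^ n * Real.exp (n * lam ^ 2 / 2)) := by
      rw [hswap]
      refine Finset.sum_le_sum fun j _ => ?_
      have hb1 := mgf_bound lam (fun i => x i j) (fun i => hx i j)
      have hb2 := mgf_bound lam (fun i => -(x i j)) (fun i => by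
        rw [abs_neg]; exact hx i j)
      exact add_le_add hb1 hb2
    rw [Finset.sum_const, Finset.card_univ, Fintype.card_fin, nsmul_eq_mul] at hje
    calc (1 / (2 ^ n : ℝ)) * ∑ ε, Z ε ≤ (1 / (2 ^ n : ℝ)) *
          ((d : ℝ) * (2 ^ n * Real.exp (n * lam ^ 2 / 2) +
            2 ^ n * Real.exp (n * lam ^ 2 / 2))) :=
          mul_le_mul_of_nonneg_left hje (by positivity)
      _ = 2 * d * Real.exp (n * lam ^ 2 / 2) := by field_simp; ring
  -- combine
  have hlogZ : ∑ ε : Fin n → Bool, Real.log (Z ε) ≤ (2 ^ n : ℝ) * (lam ^ 2 * n) := by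
    have hJ := sum_log_le Z hZpos
    rw [cardfun] at hJ
    have hmono : Real.log ((1 / (2 ^ n : ℝ)) * ∑ ε, Z ε) ≤
        Real.log (2 * d * Real.exp (n * lam ^ 2 / 2)) := by
      have hsumZ : 0 < ∑ ε : Fin n → Bool, Z ε :=
        Finset.sum_pos (fun ε _ => hZpos ε) univ_nonempty
      exact Real.log_le_log (by positivity) stepC
    have hcomp : Real.log (2 * (d : ℝ) * Real.exp (n * lam ^ 2 / 2)) =
        Real.log (2 * d) + n * lam ^ 2 / 2 := by
      rw [Real.log_mul (by positivity) (Real.exp_ne_zero _), Real.log_exp]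
    have hlogd : Real.log (2 * (d : ℝ)) = lam ^ 2 * n / 2 := by
      rw [hlam2]; field_simp
    have : Real.log (2 * (d : ℝ)) + n * lam ^ 2 / 2 = lam ^ 2 * n := by
      rw [hlogd]; ring
    calc ∑ ε : Fin n → Bool, Real.log (Z ε)
        ≤ (2 ^ n : ℝ) * Real.log ((1 / (2 ^ n : ℝ)) * ∑ ε, Z ε) := hJ
      _ ≤ (2 ^ n : ℝ) * (lam ^ 2 * n) := by
          apply mul_le_mul_of_nonneg_left _ (by positivity)
          rw [← this, ← hcomp]
          exact hmono
  calc ∑ ε : Fin n → Bool, ⨆ u : Uball d, ∑ i, sgn ε i * ∑ j, u.1 j * x i j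
      ≤ ∑ ε : Fin n → Bool, (1 / lam) * Real.log (Z ε) :=
        Finset.sum_le_sum fun ε _ => stepA ε
    _ = (1 / lam) * ∑ ε : Fin n → Bool, Real.log (Z ε) := by
        rw [Finset.mul_sum]
    _ ≤ (1 / lam) * ((2 ^ n : ℝ) * (lam ^ 2 * n)) := by
        exact mul_le_mul_of_nonneg_left hlogZ (by positivity)
    _ = 2 ^ n * (n * lam) := by
        field_simp

end Linear
end Stmt6

/-- Rademacher complexity bound for two-layer networks with path norm at most `Q`:
`R̂_n(F_Q) ≤ 2Q√(2 ln(2d)/n)` for samples in `[-1,1]^d`, where `σ` is 1-Lipschitz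
and positively homogeneous, and the expectation over Rademacher signs is written
as an average over all sign vectors `ε : Fin n → Bool`. -/
theorem stmt_6 (d n m : ℕ) (hd : 0 < d) (hn : 0 < n)
    (σ : ℝ → ℝ) (hσlip : ∀ s t : ℝ, |σ s - σ t| ≤ |s - t|)
    (hσhom : ∀ (α t : ℝ), 0 ≤ α → σ (α * t) = α * σ t)
    (Q : ℝ) (hQ : 0 ≤ Q)
    (x : Fin n → Fin d → ℝ) (hx : ∀ i j, |x i j| ≤ 1) :
    (1 / (n : ℝ)) * ((1 / (2 ^ n : ℝ)) * ∑ ε : Fin n → Bool,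
        ⨆ θ : {p : (Fin m → ℝ) × (Fin m → Fin d → ℝ) //
            ∑ k, |p.1 k| * ∑ j, |p.2 k j| ≤ Q},
          ∑ i, (if ε i then (1 : ℝ) else -1) *
            ∑ k, θ.1.1 k * σ (∑ j, θ.1.2 k j * x i j))
      ≤ 2 * Q * Real.sqrt (2 * Real.log (2 * d) / n) := by
  classical
  simp only [show ∀ (ε : Fin n → Bool) (i : Fin n),
      (if ε i then (1:ℝ) else -1) = Stmt6.sgn ε i from fun _ _ => rfl]
  haveI hθne : Nonempty {p : (Fin m → ℝ) × (Fin m → Fin d → ℝ) //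
      ∑ k, |p.1 k| * ∑ j, |p.2 k j| ≤ Q} :=
    ⟨⟨(fun _ => 0, fun _ _ => 0), by simpa using hQ⟩⟩
  have σ0 : σ 0 = 0 := by have := hσhom 0 0 le_rfl; simpa using this
  have hσabs : ∀ t : ℝ, |σ t| ≤ |t| := fun t => by
    have := hσlip t 0; simpa [σ0] using this
  set g : Stmt6.Uball d → Fin n → ℝ := fun u i => ∑ j, u.1 j * x i j with hgdef
  have hg : ∀ u i, |g u i| ≤ 1 := by
    intro u i
    calc |∑ j, u.1 j * x i j| ≤ ∑ j, |u.1 j * x i j| := Finset.abs_sum_le_sum_abs _ _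
      _ ≤ ∑ j, |u.1 j| := Finset.sum_le_sum fun j _ => by
          rw [abs_mul]
          nlinarith [abs_nonneg (u.1 j), hx i j, abs_nonneg (x i j)]
      _ ≤ 1 := u.2
  have hσg : ∀ u i, |σ (g u i)| ≤ 1 := fun u i => (hσabs _).trans (hg u i)
  have hσgm : ∀ u i, |(-(σ (g u i)))| ≤ 1 := fun u i => by
    rw [abs_neg]; exact hσg u i
  set Splus : (Fin n → Bool) → ℝ :=
    fun ε => ⨆ u : Stmt6.Uball d, ∑ i, Stmt6.sgn ε i * σ (g u i) with hSplus
  set Sminus : (Fin n → Bool) → ℝ :=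
    fun ε => ⨆ u : Stmt6.Uball d, ∑ i, Stmt6.sgn ε i * (-(σ (g u i))) with hSminus
  have hbddp : ∀ ε, BddAbove (Set.range fun u : Stmt6.Uball d =>
      ∑ i, Stmt6.sgn ε i * σ (g u i)) :=
    fun ε => Stmt6.bdd_range (f := fun u i => σ (g u i)) hσg ε
  have hbddm : ∀ ε, BddAbove (Set.range fun u : Stmt6.Uball d =>
      ∑ i, Stmt6.sgn ε i * (-(σ (g u i)))) :=
    fun ε => Stmt6.bdd_range (f := fun u i => -(σ (g u i))) hσgm ε
  set u₀ : Stmt6.Uball d := ⟨fun _ => 0, by simp⟩ with hu₀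
  have hgu₀ : ∀ i, g u₀ i = 0 := fun i => by simp [hgdef, hu₀]
  have hSp0 : ∀ ε, 0 ≤ Splus ε := by
    intro ε
    have h := le_ciSup (hbddp ε) u₀
    have h0 : (∑ i, Stmt6.sgn ε i * σ (g u₀ i)) = 0 := by
      refine Finset.sum_eq_zero fun i _ => by rw [hgu₀ i, σ0, mul_zero]
    rw [h0] at h; exact h
  have hSm0 : ∀ ε, 0 ≤ Sminus ε := by
    intro ε
    have h := le_ciSup (hbddm ε) u₀
    have h0 : (∑ i, Stmt6.sgn ε i * (-(σ (g u₀ i)))) = 0 := by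
      refine Finset.sum_eq_zero fun i _ => by rw [hgu₀ i, σ0, neg_zero, mul_zero]
    rw [h0] at h; exact h
  -- reduction to one neuron
  have red : ∀ ε : Fin n → Bool,
      (⨆ θ : {p : (Fin m → ℝ) × (Fin m → Fin d → ℝ) //
          ∑ k, |p.1 k| * ∑ j, |p.2 k j| ≤ Q},
        ∑ i, Stmt6.sgn ε i * ∑ k, θ.1.1 k * σ (∑ j, θ.1.2 k j * x i j)) ≤
      Q * (Splus ε + Sminus ε) := by
    intro ε
    refine ciSup_le fun θ => ?_
    obtain ⟨⟨a, w⟩, hθ⟩ := θ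
    dsimp only
    have hswap : ∑ i, Stmt6.sgn ε i * ∑ k, a k * σ (∑ j, w k j * x i j) =
        ∑ k, a k * ∑ i, Stmt6.sgn ε i * σ (∑ j, w k j * x i j) := by
      calc ∑ i, Stmt6.sgn ε i * ∑ k, a k * σ (∑ j, w k j * x i j)
          = ∑ i, ∑ k, a k * (Stmt6.sgn ε i * σ (∑ j, w k j * x i j)) := by
            refine Finset.sum_congr rfl fun i _ => ?_
            rw [Finset.mul_sum]
            exact Finset.sum_congr rfl fun k _ => by ring
        _ = ∑ k, ∑ i, a k * (Stmt6.sgn ε i * σ (∑ j, w k j * x i j)) :=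
            Finset.sum_comm
        _ = ∑ k, a k * ∑ i, Stmt6.sgn ε i * σ (∑ j, w k j * x i j) := by
            refine Finset.sum_congr rfl fun k _ => (Finset.mul_sum _ _ _).symm
    rw [hswap]
    have hterm : ∀ k, a k * ∑ i, Stmt6.sgn ε i * σ (∑ j, w k j * x i j) ≤
        (|a k| * ∑ j, |w k j|) * (Splus ε + Sminus ε) := by
      intro k
      set c : ℝ := ∑ j, |w k j| with hc
      have hc0 : 0 ≤ c := Finset.sum_nonneg fun j _ => abs_nonneg _
      set uk : Stmt6.Uball d := ⟨fun j => if c = 0 then 0 else c⁻¹ * w k j, by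
        by_cases hcz : c = 0
        · simp [hcz]
        · have hcpos : 0 < c := lt_of_le_of_ne hc0 (Ne.symm hcz)
          simp only [if_neg hcz]
          have habs : ∀ j ∈ (univ : Finset (Fin d)), |c⁻¹ * w k j| = c⁻¹ * |w k j| :=
            fun j _ => by rw [abs_mul, abs_of_nonneg (inv_nonneg.mpr hc0)]
          rw [Finset.sum_congr rfl habs, ← Finset.mul_sum, ← hc, inv_mul_cancel₀ hcz]⟩
        with huk
      have hid : ∀ i, σ (∑ j, w k j * x i j) = c * σ (g uk i) := by
        intro i
        by_cases hcz : c = 0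
        · have hw : ∀ j, w k j = 0 := by
            intro j
            have h2 := (Finset.sum_eq_zero_iff_of_nonneg
              (fun j _ => abs_nonneg (w k j))).mp (by rw [← hc]; exact hcz) j (mem_univ j)
            exact abs_eq_zero.mp h2
          have h1 : (∑ j, w k j * x i j) = 0 :=
            Finset.sum_eq_zero fun j _ => by rw [hw j, zero_mul]
          rw [h1, σ0, hcz, zero_mul]
        · have hgu : g uk i = c⁻¹ * ∑ j, w k j * x i j := by
            rw [hgdef]
            dsimp only [huk]
            show ∑ j, (if c = 0 then (0:ℝ) else c⁻¹ * w k j) * x i j = c⁻¹ * ∑ j, w k j * x i j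
            simp only [if_neg hcz]
            rw [Finset.mul_sum]
            exact Finset.sum_congr rfl fun j _ => by ring
          rw [hgu, hσhom c⁻¹ _ (inv_nonneg.mpr hc0), ← mul_assoc,
            mul_inv_cancel₀ hcz, one_mul]
      have hpull : ∑ i, Stmt6.sgn ε i * σ (∑ j, w k j * x i j) =
          c * ∑ i, Stmt6.sgn ε i * σ (g uk i) := by
        rw [Finset.mul_sum]
        exact Finset.sum_congr rfl fun i _ => by rw [hid i]; ring
      set A : ℝ := ∑ i, Stmt6.sgn ε i * σ (g uk i) with hA
      have hA1 : A ≤ Splus ε := le_ciSup (hbddp ε) uk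
      have hA2 : -A ≤ Sminus ε := by
        have h := le_ciSup (hbddm ε) uk
        have h0 : (∑ i, Stmt6.sgn ε i * (-(σ (g uk i)))) = -A := by
          rw [hA, ← Finset.sum_neg_distrib]
          exact Finset.sum_congr rfl fun i _ => by ring
        rw [h0] at h; exact h
      rw [hpull]
      rcases le_or_gt 0 (a k) with ha | ha
      · rw [abs_of_nonneg ha]
        calc a k * (c * A) = (a k * c) * A := by ring
          _ ≤ (a k * c) * Splus ε :=
            mul_le_mul_of_nonneg_left hA1 (mul_nonneg ha hc0)
          _ ≤ (a k * c) * (Splus ε + Sminus ε) := by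
            nlinarith [hSm0 ε, mul_nonneg ha hc0]
          _ = a k * c * (Splus ε + Sminus ε) := by ring
      · rw [abs_of_neg ha]
        calc a k * (c * A) = ((-a k) * c) * (-A) := by ring
          _ ≤ ((-a k) * c) * Sminus ε :=
            mul_le_mul_of_nonneg_left hA2 (mul_nonneg (by linarith) hc0)
          _ ≤ ((-a k) * c) * (Splus ε + Sminus ε) := by
            nlinarith [hSp0 ε, mul_nonneg (neg_nonneg.mpr ha.le) hc0]
          _ = -a k * c * (Splus ε + Sminus ε) := by ring
    calc ∑ k, a k * ∑ i, Stmt6.sgn ε i * σ (∑ j, w k j * x i j)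
        ≤ ∑ k, (|a k| * ∑ j, |w k j|) * (Splus ε + Sminus ε) :=
          Finset.sum_le_sum fun k _ => hterm k
      _ = (∑ k, |a k| * ∑ j, |w k j|) * (Splus ε + Sminus ε) :=
          (Finset.sum_mul _ _ _).symm
      _ ≤ Q * (Splus ε + Sminus ε) :=
          mul_le_mul_of_nonneg_right hθ (add_nonneg (hSp0 ε) (hSm0 ε))
  -- contraction and the linear bound
  set L : (Fin n → Bool) → ℝ :=
    fun ε => ⨆ u : Stmt6.Uball d, ∑ i, Stmt6.sgn ε i * g u i with hL
  have hcon1 : ∑ ε : Fin n → Bool, Splus ε ≤ ∑ ε : Fin n → Bool, L ε :=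
    Stmt6.contraction g 1 hg σ hσlip σ0
  have hσlipm : ∀ s t : ℝ, |(fun t => -σ t) s - (fun t => -σ t) t| ≤ |s - t| := by
    intro s t; dsimp only
    rw [show -σ s - -σ t = -(σ s - σ t) by ring, abs_neg]
    exact hσlip s t
  have hcon2 : ∑ ε : Fin n → Bool, Sminus ε ≤ ∑ ε : Fin n → Bool, L ε :=
    Stmt6.contraction g 1 hg (fun t => -σ t) hσlipm (by simp [σ0])
  have hlin : ∑ ε : Fin n → Bool, L ε ≤
      2 ^ n * (n * Real.sqrt (2 * Real.log (2 * d) / n)) :=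
    Stmt6.linear_bound hd hn x hx
  have hsum : ∑ ε : Fin n → Bool,
      (⨆ θ : {p : (Fin m → ℝ) × (Fin m → Fin d → ℝ) //
          ∑ k, |p.1 k| * ∑ j, |p.2 k j| ≤ Q},
        ∑ i, Stmt6.sgn ε i * ∑ k, θ.1.1 k * σ (∑ j, θ.1.2 k j * x i j)) ≤
      Q * (2 * (2 ^ n * (n * Real.sqrt (2 * Real.log (2 * d) / n)))) := by
    calc ∑ ε : Fin n → Bool,
        (⨆ θ : {p : (Fin m → ℝ) × (Fin m → Fin d → ℝ) //
            ∑ k, |p.1 k| * ∑ j, |p.2 k j| ≤ Q},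
          ∑ i, Stmt6.sgn ε i * ∑ k, θ.1.1 k * σ (∑ j, θ.1.2 k j * x i j))
        ≤ ∑ ε : Fin n → Bool, Q * (Splus ε + Sminus ε) :=
          Finset.sum_le_sum fun ε _ => red ε
      _ = Q * ((∑ ε : Fin n → Bool, Splus ε) + (∑ ε : Fin n → Bool, Sminus ε)) := by
          rw [← Finset.mul_sum, Finset.sum_add_distrib]
      _ ≤ Q * (2 * (2 ^ n * (n * Real.sqrt (2 * Real.log (2 * d) / n)))) := by
          apply mul_le_mul_of_nonneg_left _ hQ
          linarith
  have hnR : (0 : ℝ) < n := by exact_mod_cast hn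
  have h2n : (0 : ℝ) < (2 : ℝ) ^ n := by positivity
  calc (1 / (n : ℝ)) * ((1 / (2 ^ n : ℝ)) * ∑ ε : Fin n → Bool,
        ⨆ θ : {p : (Fin m → ℝ) × (Fin m → Fin d → ℝ) //
            ∑ k, |p.1 k| * ∑ j, |p.2 k j| ≤ Q},
          ∑ i, Stmt6.sgn ε i * ∑ k, θ.1.1 k * σ (∑ j, θ.1.2 k j * x i j))
      ≤ (1 / (n : ℝ)) * ((1 / (2 ^ n : ℝ)) *
          (Q * (2 * (2 ^ n * (n * Real.sqrt (2 * Real.log (2 * d) / n)))))) := by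
        refine mul_le_mul_of_nonneg_left ?_ (by positivity)
        exact mul_le_mul_of_nonneg_left hsum (by positivity)
    _ = 2 * Q * Real.sqrt (2 * Real.log (2 * d) / n) := by
        field_simp
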